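/- Let A₁, A₂ ∈ ℝ^{n×n} be positive semidefinite and let G₁ ∈ ℝ^{n×n} satisfy G₁·G₁ᵀ = A₁. Then: (a) trace(√(G₁ᵀ·A₂·G₁)) = trace(√(√A₁·A₂·√A₁)); (b) there exists G₂ ∈ ℝ^{n×n} with G₂·G₂ᵀ = A₂ such that G₁ᵀ·G₂ is positive semidefinite; and (c) for every G₂ with G₂·G₂ᵀ = A₂, the matrix G₁ᵀ·G₂ is positive semidefinite if and only if trace(G₁ᵀ·G₂) = trace(√(√A₁·A₂·√A₁)). -/

import Mathlib

open Matrix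

/-- The positive semidefinite square root of a psd matrix (junk value `0` otherwise). -/
noncomputable def psdSqrt {n : ℕ} (M : Matrix (Fin n) (Fin n) ℝ) : Matrix (Fin n) (Fin n) ℝ :=
  letI := Classical.propDecidable M.PosSemidef
  if h : M.PosSemidef then
    (h.1.eigenvectorUnitary : Matrix (Fin n) (Fin n) ℝ) *
      diagonal ((↑) ∘ (√·) ∘ h.1.eigenvalues) *
      (star h.1.eigenvectorUnitary : Matrix (Fin n) (Fin n) ℝ)
  else 0

/-- `trace √(√A·B·√A)`. -/
noncomputable def sqrtTr {n : ℕ} (A B : Matrix (Fin n) (Fin n) ℝ) : ℝ :=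
  (psdSqrt (psdSqrt A * B * psdSqrt A)).trace

/-- `T` is an optimal transport matrix from `A` to `B`. -/
def IsOT {n : ℕ} (A B T : Matrix (Fin n) (Fin n) ℝ) : Prop :=
  T * A * Tᵀ = B ∧ (A * T).trace = sqrtTr A B

/-- Squared Bures–Wasserstein distance. -/
noncomputable def W2sq {n : ℕ} (A B : Matrix (Fin n) (Fin n) ℝ) : ℝ :=
  A.trace + B.trace - 2 * sqrtTr A B

namespace Stmt6Aux

variable {n : ℕ}
open scoped MatrixOrder

lemma psdSqrt_of_posSemidef {M : Matrix (Fin n) (Fin n) ℝ} (h : M.PosSemidef) :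
    psdSqrt M = CFC.sqrt M := by
  rw [psdSqrt, dif_pos h, CFC.sqrt_eq_cfc, cfc_nnreal_eq_real _ M h.nonneg, h.1.cfc_eq]
  simp only [IsHermitian.cfc, Unitary.conjStarAlgAut_apply]
  congr 3
  funext i
  simp [Real.coe_toNNReal', h.eigenvalues_nonneg i]

lemma psdSqrt_eq {M P : Matrix (Fin n) (Fin n) ℝ} (hP : P.PosSemidef) (h : P * P = M) :
    psdSqrt M = P := by
  have hM : M.PosSemidef := by
    have := posSemidef_conjTranspose_mul_self P
    rwa [hP.isHermitian, h] at this
  rw [psdSqrt_of_posSemidef hM]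
  exact CFC.sqrt_unique h hP.nonneg

lemma transpose_eq {M : Matrix (Fin n) (Fin n) ℝ} (h : M.PosSemidef) : Mᵀ = M := by
  rw [← conjTranspose_eq_transpose_of_trivial]
  exact h.isHermitian

lemma exists_orth (N : Matrix (Fin n) (Fin n) ℝ) (d : Fin n → ℝ)
    (h : Nᵀ * N = diagonal d) :
    ∃ W : Matrix (Fin n) (Fin n) ℝ, Wᵀ * W = 1 ∧ W * Wᵀ = 1 ∧
      N = W * diagonal (fun i => Real.sqrt (d i)) := by
  have hNN : ∀ i j, ∑ r, N r i * N r j = diagonal d i j := by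
    intro i j
    rw [← h, mul_apply]
    simp [transpose_apply]
  have hd : ∀ i, 0 ≤ d i := by
    intro i
    have := hNN i i
    rw [diagonal_apply_eq] at this
    rw [← this]
    exact Finset.sum_nonneg fun r _ => mul_self_nonneg _
  set v : Fin n → EuclideanSpace ℝ (Fin n) :=
    fun i => WithLp.toLp 2 ((Real.sqrt (d i))⁻¹ • (fun r => N r i)) with hv
  have hcol : ∀ i j, (inner ℝ (v i) (v j) : ℝ) =
      (Real.sqrt (d i))⁻¹ * ((Real.sqrt (d j))⁻¹ * diagonal d i j) := by
    intro i j
    rw [← hNN i j]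
    simp only [hv, PiLp.inner_apply, RCLike.inner_apply, starRingEnd_apply, star_trivial,
      PiLp.toLp_apply, PiLp.smul_apply, smul_eq_mul]
    rw [Finset.mul_sum, Finset.mul_sum]
    congr 1; ext r
    simp only [Pi.smul_apply, smul_eq_mul]
    ring
  have horth : Orthonormal ℝ (({i | d i ≠ 0} : Set (Fin n)).restrict v) := by
    rw [orthonormal_iff_ite]
    rintro ⟨i, hi⟩ ⟨j, hj⟩
    show (inner ℝ (v i) (v j) : ℝ) = _
    rw [hcol i j]
    by_cases hij : i = j
    · subst hij
      have hdi : 0 < d i := lt_of_le_of_ne (hd i) (Ne.symm hi)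
      have hs : Real.sqrt (d i) * Real.sqrt (d i) = d i := Real.mul_self_sqrt (hd i)
      have hsne : Real.sqrt (d i) ≠ 0 := ne_of_gt (Real.sqrt_pos.mpr hdi)
      simp only [diagonal_apply_eq, if_pos rfl]
      rw [← hs]
      field_simp
      simp [Real.sqrt_sq (Real.sqrt_nonneg _)]
    · have : (⟨i, hi⟩ : {i | d i ≠ 0}) ≠ ⟨j, hj⟩ := by simp [hij]
      simp [diagonal_apply_ne _ hij, this]
  obtain ⟨b, hb⟩ := horth.exists_orthonormalBasis_extension_of_card_eq
    (by simp [finrank_euclideanSpace])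
  set W : Matrix (Fin n) (Fin n) ℝ := Matrix.of fun r i => b i r with hW
  have hWtW : Wᵀ * W = 1 := by
    ext i j
    have hbij := (orthonormal_iff_ite.mp b.orthonormal) i j
    simp only [PiLp.inner_apply, RCLike.inner_apply, starRingEnd_apply, star_trivial] at hbij
    rw [mul_apply, one_apply]
    simpa [hW, transpose_apply, mul_comm] using hbij
  refine ⟨W, hWtW, mul_eq_one_comm.mp hWtW, ?_⟩
  ext r i
  rw [mul_diagonal]
  by_cases hi : d i = 0
  · have hz : ∑ r', N r' i * N r' i = 0 := by
      have := hNN i i; rw [diagonal_apply_eq, hi] at this; exact this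
    have hNz : N r i = 0 := by
      have := (Finset.sum_eq_zero_iff_of_nonneg
        (fun r' _ => mul_self_nonneg (N r' i))).mp hz r (Finset.mem_univ r)
      exact mul_self_eq_zero.mp this
    simp [hNz, hi]
  · have hb' : b i = v i := hb i hi
    have hdi : 0 < d i := lt_of_le_of_ne (hd i) (Ne.symm hi)
    have hsne : Real.sqrt (d i) ≠ 0 := ne_of_gt (Real.sqrt_pos.mpr hdi)
    have : W r i = (Real.sqrt (d i))⁻¹ * N r i := by
      simp only [hW, Matrix.of_apply, hb', hv, PiLp.toLp_apply, Pi.smul_apply, smul_eq_mul]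
    rw [this]
    field_simp

lemma exists_polar (M : Matrix (Fin n) (Fin n) ℝ) :
    ∃ U P : Matrix (Fin n) (Fin n) ℝ, Uᵀ * U = 1 ∧ U * Uᵀ = 1 ∧ P.PosSemidef ∧
      P * P = Mᵀ * M ∧ M = U * P := by
  have hMM : (Mᵀ * M).PosSemidef := by
    have := posSemidef_conjTranspose_mul_self M
    rwa [conjTranspose_eq_transpose_of_trivial] at this
  have hH := hMM.isHermitian
  set V : Matrix (Fin n) (Fin n) ℝ := (hH.eigenvectorUnitary : Matrix (Fin n) (Fin n) ℝ) with hV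
  have hVsV : Vᵀ * V = 1 := by
    have := mem_unitaryGroup_iff'.mp hH.eigenvectorUnitary.2
    rwa [star_eq_conjTranspose, conjTranspose_eq_transpose_of_trivial] at this
  have hVVs : V * Vᵀ = 1 := mul_eq_one_comm.mp hVsV
  have hspec : Mᵀ * M = V * diagonal hH.eigenvalues * Vᵀ := by
    have h1 := hH.spectral_theorem
    rw [Unitary.conjStarAlgAut_apply, star_eq_conjTranspose, conjTranspose_eq_transpose_of_trivial] at h1
    have h2 : diagonal (RCLike.ofReal ∘ hH.eigenvalues) = diagonal hH.eigenvalues := by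
      exact congrArg diagonal (funext fun i => by simp [RCLike.ofReal_real_eq_id])
    rwa [h2] at h1
  have hNtN : (M * V)ᵀ * (M * V) = diagonal hH.eigenvalues := by
    rw [transpose_mul]
    calc Vᵀ * Mᵀ * (M * V) = Vᵀ * (Mᵀ * M) * V := by noncomm_ring
    _ = Vᵀ * (V * diagonal hH.eigenvalues * Vᵀ) * V := congrArg (fun X => Vᵀ * X * V) hspec
    _ = (Vᵀ * V) * diagonal hH.eigenvalues * (Vᵀ * V) := by noncomm_ring
    _ = diagonal hH.eigenvalues := by rw [hVsV, one_mul, mul_one]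
  obtain ⟨W, hW1, hW2, hNW⟩ := exists_orth (M * V) hH.eigenvalues hNtN
  set σ : Fin n → ℝ := fun i => Real.sqrt (hH.eigenvalues i)
  refine ⟨W * Vᵀ, V * diagonal σ * Vᵀ, ?_, ?_, ?_, ?_, ?_⟩
  · calc (W * Vᵀ)ᵀ * (W * Vᵀ) = V * (Wᵀ * W) * Vᵀ := by rw [transpose_mul, transpose_transpose]; noncomm_ring
    _ = 1 := by rw [hW1, mul_one, hVVs]
  · calc (W * Vᵀ) * (W * Vᵀ)ᵀ = W * (Vᵀ * V) * Wᵀ := by rw [transpose_mul, transpose_transpose]; noncomm_ring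
    _ = 1 := by rw [hVsV, mul_one, hW2]
  · have hdps : (diagonal σ).PosSemidef :=
      posSemidef_diagonal_iff.mpr fun i => Real.sqrt_nonneg _
    have := hdps.mul_mul_conjTranspose_same V
    rwa [conjTranspose_eq_transpose_of_trivial] at this
  · have hσ2 : diagonal σ * diagonal σ = diagonal hH.eigenvalues := by
      rw [diagonal_mul_diagonal]
      exact congrArg diagonal (funext fun i => Real.mul_self_sqrt (hMM.eigenvalues_nonneg i))
    calc (V * diagonal σ * Vᵀ) * (V * diagonal σ * Vᵀ)
        = V * (diagonal σ * (Vᵀ * V) * diagonal σ) * Vᵀ := by noncomm_ring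
      _ = V * (diagonal σ * diagonal σ) * Vᵀ := by rw [hVsV]; noncomm_ring
      _ = V * diagonal hH.eigenvalues * Vᵀ := by rw [hσ2]
      _ = Mᵀ * M := hspec.symm
  · calc M = M * (V * Vᵀ) := by rw [hVVs, mul_one]
      _ = (M * V) * Vᵀ := by noncomm_ring
      _ = (W * diagonal σ) * Vᵀ := by rw [hNW]
      _ = (W * Vᵀ) * (V * diagonal σ * Vᵀ) := by
          calc (W * diagonal σ) * Vᵀ = W * (Vᵀ * V) * diagonal σ * Vᵀ := by rw [hVsV]; noncomm_ring
          _ = (W * Vᵀ) * (V * diagonal σ * Vᵀ) := by noncomm_ring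

end Stmt6Aux

namespace Stmt6Aux2
open Stmt6Aux

variable {n : ℕ}

lemma trace_psdSqrt_comm (M : Matrix (Fin n) (Fin n) ℝ) :
    (psdSqrt (Mᵀ * M)).trace = (psdSqrt (M * Mᵀ)).trace := by
  obtain ⟨U, P, hU1, hU2, hP, hPP, hM⟩ := exists_polar M
  have hPt : Pᵀ = P := transpose_eq hP
  have h1 : psdSqrt (Mᵀ * M) = P := psdSqrt_eq hP hPP
  have hQ : (U * P * Uᵀ).PosSemidef := by
    have := hP.mul_mul_conjTranspose_same U
    rwa [conjTranspose_eq_transpose_of_trivial] at this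
  have h2 : psdSqrt (M * Mᵀ) = U * P * Uᵀ := by
    apply psdSqrt_eq hQ
    calc (U * P * Uᵀ) * (U * P * Uᵀ) = U * (P * (Uᵀ * U) * P) * Uᵀ := by noncomm_ring
      _ = U * (P * P) * Uᵀ := by rw [hU1]; noncomm_ring
      _ = M * Mᵀ := by rw [hM, transpose_mul, hPt]; noncomm_ring
  rw [h1, h2, trace_mul_cycle, hU1, one_mul]

lemma trace_eq_of_green {X Y : Matrix (Fin n) (Fin n) ℝ} (h : X * Xᵀ = Y * Yᵀ) :
    (psdSqrt (Xᵀ * X)).trace = (psdSqrt (Yᵀ * Y)).trace := by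
  rw [trace_psdSqrt_comm X, trace_psdSqrt_comm Y, h]

lemma eq_zero_of_trace (C : Matrix (Fin n) (Fin n) ℝ) (h : (Cᵀ * C).trace = 0) : C = 0 := by
  have h' : ∑ j, ∑ i, C i j * C i j = 0 := by
    rw [← h, trace]
    apply Finset.sum_congr rfl
    intro j _
    rw [diag_apply, mul_apply]
    apply Finset.sum_congr rfl
    intro i _
    rw [transpose_apply]
  ext i j
  have hj := (Finset.sum_eq_zero_iff_of_nonneg
    (fun j _ => Finset.sum_nonneg fun i _ => mul_self_nonneg (C i j))).mp h' j (Finset.mem_univ j)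
  have := (Finset.sum_eq_zero_iff_of_nonneg
    (fun i _ => mul_self_nonneg (C i j))).mp hj i (Finset.mem_univ i)
  simpa using mul_self_eq_zero.mp this

end Stmt6Aux2

section Main
open Stmt6Aux Stmt6Aux2
open scoped MatrixOrder

/-- For psd `A₁, A₂` and any Green's matrix `G₁` of `A₁`:
(a) `trace √(G₁ᵀ A₂ G₁) = trace √(√A₁ A₂ √A₁)`;
(b) some Green's matrix `G₂` of `A₂` satisfies `G₁ᵀ G₂ ⪰ 0`;
(c) for every Green's matrix `G₂` of `A₂`,
    `G₁ᵀ G₂ ⪰ 0 ↔ trace (G₁ᵀ G₂) = trace √(√A₁ A₂ √A₁)`. -/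
theorem stmt6 {n : ℕ} (A₁ A₂ G₁ : Matrix (Fin n) (Fin n) ℝ)
    (hA₁ : A₁.PosSemidef) (hA₂ : A₂.PosSemidef) (hG₁ : G₁ * G₁ᵀ = A₁) :
    (psdSqrt (G₁ᵀ * A₂ * G₁)).trace = sqrtTr A₁ A₂ ∧
      (∃ G₂ : Matrix (Fin n) (Fin n) ℝ, G₂ * G₂ᵀ = A₂ ∧ (G₁ᵀ * G₂).PosSemidef) ∧
      (∀ G₂ : Matrix (Fin n) (Fin n) ℝ, G₂ * G₂ᵀ = A₂ →
        ((G₁ᵀ * G₂).PosSemidef ↔ (G₁ᵀ * G₂).trace = sqrtTr A₁ A₂)) := by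
  set S := psdSqrt A₂ with hSdef
  have hSps : S.PosSemidef := by
    rw [hSdef, psdSqrt_of_posSemidef hA₂]; exact (CFC.sqrt_nonneg _).posSemidef
  have hSt : Sᵀ = S := transpose_eq hSps
  have hSS : S * S = A₂ := by
    rw [hSdef, psdSqrt_of_posSemidef hA₂]; exact CFC.sqrt_mul_sqrt_self _ hA₂.nonneg
  set R := psdSqrt A₁ with hRdef
  have hRps : R.PosSemidef := by
    rw [hRdef, psdSqrt_of_posSemidef hA₁]; exact (CFC.sqrt_nonneg _).posSemidef
  have hRt : Rᵀ = R := transpose_eq hRps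
  have hRR : R * R = A₁ := by
    rw [hRdef, psdSqrt_of_posSemidef hA₁]; exact CFC.sqrt_mul_sqrt_self _ hA₁.nonneg
  -- part (a)
  have ha : (psdSqrt (G₁ᵀ * A₂ * G₁)).trace = sqrtTr A₁ A₂ := by
    have hgreen : (S * G₁) * (S * G₁)ᵀ = (S * R) * (S * R)ᵀ := by
      rw [transpose_mul, transpose_mul, hSt, hRt]
      calc S * G₁ * (G₁ᵀ * S) = S * (G₁ * G₁ᵀ) * S := by noncomm_ring
        _ = S * (R * R) * S := by rw [hG₁, hRR]
        _ = S * R * (R * S) := by noncomm_ring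
    have key := trace_eq_of_green hgreen
    have e1 : (S * G₁)ᵀ * (S * G₁) = G₁ᵀ * A₂ * G₁ := by
      rw [transpose_mul, hSt, ← hSS]; noncomm_ring
    have e2 : (S * R)ᵀ * (S * R) = R * A₂ * R := by
      rw [transpose_mul, hSt, hRt, ← hSS]; noncomm_ring
    rw [e1, e2] at key
    exact key
  refine ⟨ha, ?_, ?_⟩
  -- part (b)
  · obtain ⟨U, P, hU1, hU2, hP, hPP, hM⟩ := exists_polar (S * G₁)
    refine ⟨S * U, ?_, ?_⟩
    · rw [transpose_mul, hSt]
      calc S * U * (Uᵀ * S) = S * (U * Uᵀ) * S := by noncomm_ring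
        _ = A₂ := by rw [hU2, mul_one, hSS]
    · have : G₁ᵀ * (S * U) = P := by
        have hPt : Pᵀ = P := transpose_eq hP
        have : (S * G₁)ᵀ = P * Uᵀ := by rw [hM, transpose_mul, hPt]
        rw [transpose_mul, hSt] at this
        calc G₁ᵀ * (S * U) = (G₁ᵀ * S) * U := by noncomm_ring
          _ = (P * Uᵀ) * U := by rw [this]
          _ = P * (Uᵀ * U) := by noncomm_ring
          _ = P := by rw [hU1, mul_one]
      rw [this]; exact hP
  -- part (c)
  · intro G₂ hG₂
    set T := G₁ᵀ * G₂ with hTdef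
    have hTTt : T * Tᵀ = G₁ᵀ * A₂ * G₁ := by
      rw [hTdef, transpose_mul, transpose_transpose]
      calc G₁ᵀ * G₂ * (G₂ᵀ * G₁) = G₁ᵀ * (G₂ * G₂ᵀ) * G₁ := by noncomm_ring
        _ = G₁ᵀ * A₂ * G₁ := by rw [hG₂]
    have htr : (psdSqrt (Tᵀ * T)).trace = sqrtTr A₁ A₂ := by
      rw [trace_psdSqrt_comm T, hTTt, ha]
    constructor
    · intro hTps
      have hTt : Tᵀ = T := transpose_eq hTps
      have heq : psdSqrt (Tᵀ * T) = T := psdSqrt_eq hTps (by rw [hTt])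
      rw [← htr, heq]
    · intro htrT
      obtain ⟨U, P, hU1, hU2, hP, hPP, hM⟩ := exists_polar T
      have hPt : Pᵀ = P := transpose_eq hP
      have hPs : psdSqrt (Tᵀ * T) = P := psdSqrt_eq hP hPP
      have htrP : P.trace = T.trace := by rw [← hPs, htr, htrT]
      set B := psdSqrt P with hBdef
      have hBps : B.PosSemidef := by
        rw [hBdef, psdSqrt_of_posSemidef hP]; exact (CFC.sqrt_nonneg _).posSemidef
      have hBt : Bᵀ = B := transpose_eq hBps
      have hBB : B * B = P := by
        rw [hBdef, psdSqrt_of_posSemidef hP]; exact CFC.sqrt_mul_sqrt_self _ hP.nonneg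
      have htrBUB : (B * U * B).trace = P.trace := by
        rw [trace_mul_cycle]
        calc (B * B * U).trace = (P * U).trace := by rw [hBB]
          _ = (U * P).trace := trace_mul_comm _ _
          _ = T.trace := by rw [← hM]
          _ = P.trace := htrP.symm
      have htrBUtB : (B * Uᵀ * B).trace = P.trace := by
        rw [trace_mul_cycle]
        calc (B * B * Uᵀ).trace = (P * Uᵀ).trace := by rw [hBB]
          _ = ((P * Uᵀ)ᵀ).trace := (trace_transpose _).symm
          _ = (U * P).trace := by rw [transpose_mul, transpose_transpose, hPt]
          _ = T.trace := by rw [← hM]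
          _ = P.trace := htrP.symm
      have hC : ((B - U * B)ᵀ * (B - U * B)).trace = 0 := by
        have hexp : (B - U * B)ᵀ * (B - U * B)
            = B * B - B * U * B - B * Uᵀ * B + B * (Uᵀ * U) * B := by
          rw [transpose_sub, transpose_mul, hBt]
          noncomm_ring
        rw [hexp, hU1]
        rw [trace_add, trace_sub, trace_sub, htrBUB, htrBUtB]
        rw [mul_one, hBB]
        ring
      have hCz : B - U * B = 0 := eq_zero_of_trace _ hC
      have hUB : U * B = B := by
        have := sub_eq_zero.mp hCz
        exact this.symm
      have hTP : T = P := by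
        rw [hM, ← hBB, ← mul_assoc, hUB]
      rw [hTP]; exact hP

end Main
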